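/- Let {χ_γ}_{γ∈Γ} be a localized frame in ℋ with constant G ≥ 1 and rate λ > 0, and let S be its frame operator. Then for every p ∈ ℕ₀ and all 0 < ε < δ < λ: |⟨χ_γ, S^p χ_{γ'}⟩| ≤ G·(G·m_ε)^p·exp(−(λ−δ)·d(γ,γ')) for all γ, γ' ∈ Γ, where m_ε = sup_{γ∈Γ} Σ_{ξ∈Γ} exp(−ε·d(γ,ξ)). -/

import Mathlib

/-- For a localized frame `{χ_γ}` with constant `G ≥ 1` and rate
`λ > 0`, and frame operator `S`, the matrix elements of the powers of `S` satisfy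
`|⟨χ_γ, S^p χ_{γ'}⟩| ≤ G (G m_ε)^p e^{-(λ-δ) d(γ,γ')}` for all `p ∈ ℕ₀` and all
`0 < ε < δ < λ`, where `m_ε = sup_γ Σ_ξ e^{-ε d(γ,ξ)}`. -/
theorem stmt_18
    {H : Type*} [NormedAddCommGroup H] [InnerProductSpace ℂ H] [CompleteSpace H]
    {Γ : Type*} [Countable Γ] [MetricSpace Γ]
    (mval : ℝ → ℝ)
    (hm : ∀ ε : ℝ, 0 < ε → ∀ γ : Γ,
      ∃ s : ℝ, s ≤ mval ε ∧ HasSum (fun ξ : Γ => Real.exp (-ε * dist γ ξ)) s)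
    (χ : Γ → H) (A B : ℝ) (hA : 0 < A) (hAB : A ≤ B)
    (hframe : ∀ ψ : H, ∃ s : ℝ,
      HasSum (fun γ : Γ => ‖(inner ℂ (χ γ) ψ : ℂ)‖ ^ 2) s ∧
        A * ‖ψ‖ ^ 2 ≤ s ∧ s ≤ B * ‖ψ‖ ^ 2)
    (S : H →L[ℂ] H)
    (hS : ∀ ψ : H, HasSum (fun γ : Γ => (inner ℂ (χ γ) ψ : ℂ) • χ γ) (S ψ))
    (G lam : ℝ) (hG : 1 ≤ G) (hlam : 0 < lam)
    (hnorm : ∀ γ : Γ, ‖χ γ‖ = 1)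
    (hloc : ∀ γ γ' : Γ, ‖(inner ℂ (χ γ) (χ γ') : ℂ)‖ ≤ G * Real.exp (-lam * dist γ γ')) :
    ∀ (p : ℕ) (ε δ : ℝ), 0 < ε → ε < δ → δ < lam →
      ∀ γ γ' : Γ, ‖(inner ℂ (χ γ) ((S ^ p) (χ γ')) : ℂ)‖
        ≤ G * (G * mval ε) ^ p * Real.exp (-(lam - δ) * dist γ γ') := by

  intro p ε δ hε hεδ hdl
  have hG0 : (0:ℝ) < G := lt_of_lt_of_le one_pos hG
  induction p with
  | zero =>
    intro γ γ'
    have hd : 0 ≤ dist γ γ' := dist_nonneg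
    have h1 : Real.exp (-lam * dist γ γ') ≤ Real.exp (-(lam - δ) * dist γ γ') := by
      apply Real.exp_le_exp.2
      nlinarith
    calc ‖(inner ℂ (χ γ) ((S ^ 0) (χ γ')) : ℂ)‖
        = ‖(inner ℂ (χ γ) (χ γ') : ℂ)‖ := by
          simp [pow_zero]
      _ ≤ G * Real.exp (-lam * dist γ γ') := hloc γ γ'
      _ ≤ G * (G * mval ε) ^ 0 * Real.exp (-(lam - δ) * dist γ γ') := by
          simpa using mul_le_mul_of_nonneg_left h1 hG0.le
  | succ p IH =>
    intro γ γ'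
    obtain ⟨s, hs_le, hs_sum⟩ := hm ε hε γ
    have hs0 : 0 ≤ s := hs_sum.nonneg (fun ξ => (Real.exp_pos _).le)
    have hmval0 : 0 ≤ mval ε := le_trans hs0 hs_le
    set ψ := (S ^ p) (χ γ') with hψ
    have hpow : (S ^ (p + 1)) (χ γ') = S ψ := by
      rw [pow_succ']; rfl
    set C : ℝ := G * (G * mval ε) ^ p with hC
    have hC0 : 0 ≤ C := by positivity
    set K : ℝ := G * C * Real.exp (-(lam - δ) * dist γ γ') with hK
    have hK0 : 0 ≤ K := by positivity
    have hsum1 : HasSum (fun ξ : Γ => (inner ℂ (χ ξ) ψ : ℂ) • χ ξ) (S ψ) := hS ψ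
    have hsum2 : HasSum (fun ξ : Γ => (inner ℂ (χ γ) ((inner ℂ (χ ξ) ψ : ℂ) • χ ξ) : ℂ))
        ((inner ℂ (χ γ) (S ψ) : ℂ)) := (innerSL ℂ (χ γ)).hasSum hsum1
    have hgsum : HasSum (fun ξ : Γ => K * Real.exp (-ε * dist γ ξ)) (K * s) :=
      hs_sum.mul_left K
    have hbound : ∀ ξ : Γ,
        ‖(inner ℂ (χ γ) ((inner ℂ (χ ξ) ψ : ℂ) • χ ξ) : ℂ)‖ ≤ K * Real.exp (-ε * dist γ ξ) := by
      intro ξ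
      have h1 : ‖(inner ℂ (χ γ) ((inner ℂ (χ ξ) ψ : ℂ) • χ ξ) : ℂ)‖
          = ‖(inner ℂ (χ ξ) ψ : ℂ)‖ * ‖(inner ℂ (χ γ) (χ ξ) : ℂ)‖ := by
        rw [inner_smul_right, norm_mul]
      rw [h1]
      have h2 : ‖(inner ℂ (χ ξ) ψ : ℂ)‖ ≤ C * Real.exp (-(lam - δ) * dist ξ γ') := IH ξ γ'
      have h3 : ‖(inner ℂ (χ γ) (χ ξ) : ℂ)‖ ≤ G * Real.exp (-lam * dist γ ξ) := hloc γ ξ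
      have h4 : ‖(inner ℂ (χ ξ) ψ : ℂ)‖ * ‖(inner ℂ (χ γ) (χ ξ) : ℂ)‖
          ≤ (C * Real.exp (-(lam - δ) * dist ξ γ')) * (G * Real.exp (-lam * dist γ ξ)) :=
        mul_le_mul h2 h3 (norm_nonneg _) (by positivity)
      refine h4.trans ?_
      have ha : 0 ≤ dist γ ξ := dist_nonneg
      have htri : dist γ γ' ≤ dist γ ξ + dist ξ γ' := dist_triangle γ ξ γ'
      have hexp : Real.exp (-(lam - δ) * dist ξ γ') * Real.exp (-lam * dist γ ξ)
          ≤ Real.exp (-(lam - δ) * dist γ γ') * Real.exp (-ε * dist γ ξ) := by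
        rw [← Real.exp_add, ← Real.exp_add]
        apply Real.exp_le_exp.2
        nlinarith
      calc (C * Real.exp (-(lam - δ) * dist ξ γ')) * (G * Real.exp (-lam * dist γ ξ))
          = (C * G) * (Real.exp (-(lam - δ) * dist ξ γ') * Real.exp (-lam * dist γ ξ)) := by
            ring
        _ ≤ (C * G) * (Real.exp (-(lam - δ) * dist γ γ') * Real.exp (-ε * dist γ ξ)) := by
            apply mul_le_mul_of_nonneg_left hexp (by positivity)
        _ = K * Real.exp (-ε * dist γ ξ) := by rw [hK]; ring
    have hmain : ‖(inner ℂ (χ γ) (S ψ) : ℂ)‖ ≤ K * s := by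
      rw [← hsum2.tsum_eq]
      exact tsum_of_norm_bounded hgsum hbound
    have hfinal : K * s ≤ K * mval ε := mul_le_mul_of_nonneg_left hs_le hK0
    rw [hpow]
    refine (hmain.trans hfinal).trans (le_of_eq ?_)
    rw [hK, hC]
    ring
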